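/- If a 4-coloured graph Γ contains a cluster-type vertex v, i.e. the four bicoloured cycles through v of types {0,1}, {0,2}, {0,3} and {1,2} (any four distinct pairs) all have length 4 and together involve exactly nine vertices of Γ, then Γ has at least 10 vertices. -/
import Mathlib


/-- An (n+1)-coloured graph: a finite regular multigraph of degree n+1 (no loops)
with an edge-colouring by Δ_n = {0,…,n} injective on adjacent edges. -/
structure CGraph (n : ℕ) where
  V : Type
  E : Type
  [fV : Fintype V]
  [fE : Fintype E]
  [dV : DecidableEq V]
  ends : E → Sym2 V
  noLoop : ∀ e : E, ¬ (ends e).IsDiag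
  col : E → Fin (n + 1)
  regular : ∀ v : V, {e : E | v ∈ ends e}.ncard = n + 1
  proper : ∀ e f : E, e ≠ f → (∃ v : V, v ∈ ends e ∧ v ∈ ends f) → col e ≠ col f

attribute [instance] CGraph.fV CGraph.fE CGraph.dV

namespace CGraph

variable {n : ℕ}

/-- One step along an edge whose colour lies in `S`. -/
def step (G : CGraph n) (S : Set (Fin (n + 1))) (u w : G.V) : Prop :=
  ∃ e : G.E, G.col e ∈ S ∧ G.ends e = s(u, w)

/-- Connectivity by edges whose colours lie in `S`. -/
def reach (G : CGraph n) (S : Set (Fin (n + 1))) : G.V → G.V → Prop :=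
  Relation.ReflTransGen (G.step S)

/-- Number of connected components of the subgraph spanned by edges with colours in `S`. -/
noncomputable def comps (G : CGraph n) (S : Set (Fin (n + 1))) : ℕ :=
  Nat.card (Quot (G.step S))

/-- A graph is bipartite if its vertices admit a 2-colouring with no monochromatic edge. -/
def Bipartite (G : CGraph n) : Prop :=
  ∃ b : G.V → Bool, ∀ e : G.E, ∀ u ∈ G.ends e, ∀ w ∈ G.ends e, u ≠ w → b u ≠ b w

end CGraph


private lemma other'_congr {α : Type*} [DecidableEq α] {a : α} {z w : Sym2 α}
    (h : z = w) (ha : a ∈ z) (hb : a ∈ w) :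
    Sym2.Mem.other' ha = Sym2.Mem.other' hb := by subst h; rfl

private lemma even_card_of_involutive {α : Type} [Fintype α] [DecidableEq α]
    (f : α → α) (hinv : ∀ x, f (f x) = x) (hne : ∀ x, f x ≠ x) :
    Even (Fintype.card α) := by
  let F : Function.End α := f
  have hf : F ^ 2 ^ 1 = 1 := by
    have : F ^ 2 ^ 1 = F * F := by rw [pow_one, sq]
    rw [this]
    funext x
    exact hinv x
  have := Equiv.Perm.card_fixedPoints_modEq (p := 2) (n := 1) hf
  have h0 : Fintype.card (Function.fixedPoints F) = 0 := by
    rw [Fintype.card_eq_zero_iff]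
    constructor
    rintro ⟨x, hx⟩
    exact hne x hx
  rw [h0] at this
  exact (Nat.modEq_zero_iff_dvd.mp this).elim fun r hr => ⟨r, by omega⟩

/-- If a 4-coloured graph contains a cluster-type vertex `v` — four
distinct bicoloured cycles through `v`, each of length four (hence with four
vertices), together involving exactly nine vertices — then the graph has at least
10 vertices. -/
theorem stmt_18 (G : CGraph 3) (v : G.V) (S : Finset (Sym2 (Fin 4)))
    (hcard : S.card = 4) (hnd : ∀ s ∈ S, ¬ s.IsDiag)
    (hlen : ∀ s ∈ S, {w : G.V | G.reach {i | i ∈ s} v w}.ncard = 4)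
    (hnine : {w : G.V | ∃ s ∈ S, G.reach {i | i ∈ s} v w}.ncard = 9) :
    10 ≤ Fintype.card G.V := by
  classical
  -- every vertex meets exactly one edge of each colour; in particular colour 0
  have exu : ∀ u : G.V, ∃! e : G.E, u ∈ G.ends e ∧ G.col e = 0 := by
    intro u
    have hA : {e : G.E | u ∈ G.ends e}.ncard = 4 := G.regular u
    have hfin : {e : G.E | u ∈ G.ends e}.Finite := Set.toFinite _
    have hcardA : hfin.toFinset.card = 4 := by
      rw [Set.ncard_eq_toFinset_card _ hfin] at hA
      exact hA
    have hinj : Set.InjOn G.col {e : G.E | u ∈ G.ends e} := by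
      intro e he f hf hef
      by_contra hne
      exact G.proper e f hne ⟨u, he, hf⟩ hef
    have himg : (hfin.toFinset.image G.col).card = 4 := by
      rw [Finset.card_image_of_injOn]
      · exact hcardA
      · intro e he f hf
        exact hinj (by simpa using he) (by simpa using hf)
    have huniv : hfin.toFinset.image G.col = Finset.univ := by
      apply Finset.eq_univ_of_card
      simpa using himg
    have h0 : (0 : Fin 4) ∈ hfin.toFinset.image G.col := huniv ▸ Finset.mem_univ _
    obtain ⟨e, he, hce⟩ := Finset.mem_image.mp h0
    refine ⟨e, ⟨by simpa using he, hce⟩, ?_⟩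
    intro f hf
    exact hinj (by simpa using hf.1) (by simpa using he) (hf.2.trans hce.symm)
  choose ed hed using fun u => (exu u).exists
  have huniq : ∀ u : G.V, ∀ f : G.E, u ∈ G.ends f → G.col f = 0 → f = ed u := by
    intro u f hf hcf
    exact ((exu u).unique ⟨hf, hcf⟩ (hed u))
  set σ : G.V → G.V := fun u => Sym2.Mem.other' (hed u).1 with hσ
  have hmem : ∀ u, σ u ∈ G.ends (ed u) := fun u => Sym2.other_mem' (hed u).1
  have hne : ∀ u, σ u ≠ u := by
    intro u
    have := Sym2.other_ne (G.noLoop (ed u)) (hed u).1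
    rwa [Sym2.other_eq_other'] at this
  have hinv : ∀ u, σ (σ u) = u := by
    intro u
    have heq : ed (σ u) = ed u := (huniq (σ u) (ed u) (hmem u) (hed u).2).symm
    have hb : σ u ∈ G.ends (ed u) := hmem u
    have : σ (σ u) = Sym2.Mem.other' hb :=
      other'_congr (congrArg G.ends heq) (hed (σ u)).1 hb
    rw [this]
    exact Sym2.other_invol' (hed u).1 hb
  have heven : Even (Fintype.card G.V) := even_card_of_involutive σ hinv hne
  -- the nine-vertex set shows the graph has at least nine vertices
  have h9 : 9 ≤ Fintype.card G.V := by
    have := Set.ncard_le_ncard (Set.subset_univ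
      {w : G.V | ∃ s ∈ S, G.reach {i | i ∈ s} v w}) (Set.toFinite _)
    rw [hnine, Set.ncard_univ, Nat.card_eq_fintype_card] at this
    exact this
  obtain ⟨r, hr⟩ := heven
  omega
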